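/- A poset that is the disjoint union of pairwise disjoint nonempty posets is compact in its interval topology if and only if each component poset is compact in its interval topology. -/

import Mathlib

/-- The interval topology on a poset: generated by the subbase of complements of
principal down-sets `(x] = Set.Iic x` and principal up-sets `[x) = Set.Ici x`. -/
def intervalTopology (X : Type*) [Preorder X] : TopologicalSpace X :=
  TopologicalSpace.generateFrom
    ({S | ∃ x : X, S = (Set.Iic x)ᶜ} ∪ {S | ∃ x : X, S = (Set.Ici x)ᶜ})

open Set Filter Topology

lemma le_nhds_generateFrom_iff {X : Type*} {g : Set (Set X)} {F : Filter X} {a : X} :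
    F ≤ @nhds X (TopologicalSpace.generateFrom g) a ↔ ∀ s ∈ g, a ∈ s → s ∈ F := by
  rw [TopologicalSpace.nhds_generateFrom]
  simp only [le_iInf_iff, le_principal_iff, Set.mem_setOf_eq, and_imp]
  exact ⟨fun h s hs ha => h s ha hs, fun h s ha hs => h s hs ha⟩

/-- Convergence criterion in the interval topology. -/
lemma le_nhds_intervalTopology_iff {X : Type*} [Preorder X] {F : Filter X} {a : X} :
    F ≤ @nhds X (intervalTopology X) a ↔
      (∀ x : X, ¬ a ≤ x → (Set.Iic x)ᶜ ∈ F) ∧ (∀ x : X, ¬ x ≤ a → (Set.Ici x)ᶜ ∈ F) := by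
  rw [intervalTopology, le_nhds_generateFrom_iff]
  constructor
  · intro h
    refine ⟨fun x hx => h _ (Or.inl ⟨x, rfl⟩) hx, fun x hx => h _ (Or.inr ⟨x, rfl⟩) hx⟩
  · rintro ⟨h1, h2⟩ s (⟨x, rfl⟩ | ⟨x, rfl⟩) ha
    · exact h1 x ha
    · exact h2 x ha

/-- The disjoint union (with the union order) of a family of pairwise disjoint nonempty
posets is compact in its interval topology iff each member poset is compact in its
interval topology. -/
theorem disjUnion_intervalTopology_compact_iff
    {K : Type*} (X : K → Type*) [∀ k, PartialOrder (X k)]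
    (hne : ∀ k, Nonempty (X k)) :
    @CompactSpace (Σ k, X k) (intervalTopology (Σ k, X k)) ↔
      ∀ k, @CompactSpace (X k) (intervalTopology (X k)) := by
  have hcomp : ∀ {j k : K} {b : X j} {a : X k}, (⟨j, b⟩ : Σ k, X k) ≤ ⟨k, a⟩ → j = k := by
    intro j k b a h
    exact (Sigma.le_def.1 h).1
  constructor
  · -- forward: Σ compact → each X k compact
    intro hSig k
    rw [← @isCompact_univ_iff _ (intervalTopology (X k)),
      @isCompact_iff_ultrafilter_le_nhds _ (intervalTopology (X k))]
    intro G _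
    set F : Ultrafilter (Σ k, X k) := G.map (Sigma.mk k) with hF
    obtain ⟨⟨j, b⟩, -, hFle⟩ :=
      (@isCompact_iff_ultrafilter_le_nhds _ (intervalTopology (Σ k, X k)) _).1
        ((@isCompact_univ_iff _ (intervalTopology (Σ k, X k))).2 hSig) F (by simp)
    rw [le_nhds_intervalTopology_iff] at hFle
    obtain ⟨h1, h2⟩ := hFle
    by_cases hjk : j = k
    · subst hjk
      refine ⟨b, Set.mem_univ _, le_nhds_intervalTopology_iff.2 ⟨?_, ?_⟩⟩
      · intro x hx
        have : (Set.Iic (⟨j, x⟩ : Σ k, X k))ᶜ ∈ F := by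
          apply h1
          rw [Sigma.mk_le_mk_iff]; exact hx
        have := Ultrafilter.mem_map.1 this
        convert this using 1
        rw [Ultrafilter.mem_coe]; congr! 1
        ext y
        simp [Sigma.mk_le_mk_iff]
      · intro x hx
        have : (Set.Ici (⟨j, x⟩ : Σ k, X k))ᶜ ∈ F := by
          apply h2
          rw [Sigma.mk_le_mk_iff]; exact hx
        have := Ultrafilter.mem_map.1 this
        convert this using 1
        rw [Ultrafilter.mem_coe]; congr! 1
        ext y
        simp [Sigma.mk_le_mk_iff]
    · -- limit in a different component: then G contains all subbasic sets
      obtain ⟨a⟩ := hne k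
      refine ⟨a, Set.mem_univ _, le_nhds_intervalTopology_iff.2 ⟨?_, ?_⟩⟩
      · intro x _
        have : (Set.Iic (⟨k, x⟩ : Σ k, X k))ᶜ ∈ F := by
          apply h1
          intro hle
          exact hjk (hcomp hle)
        have := Ultrafilter.mem_map.1 this
        convert this using 1
        rw [Ultrafilter.mem_coe]; congr! 1
        ext y
        simp [Sigma.mk_le_mk_iff]
      · intro x _
        have : (Set.Ici (⟨k, x⟩ : Σ k, X k))ᶜ ∈ F := by
          apply h2
          intro hle
          exact hjk (hcomp hle).symm
        have := Ultrafilter.mem_map.1 this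
        convert this using 1
        rw [Ultrafilter.mem_coe]; congr! 1
        ext y
        simp [Sigma.mk_le_mk_iff]
  · -- reverse: each X k compact → Σ compact
    intro h
    rw [← @isCompact_univ_iff _ (intervalTopology (Σ k, X k)),
      @isCompact_iff_ultrafilter_le_nhds _ (intervalTopology (Σ k, X k))]
    intro F _
    by_cases hconc : ∃ k, {p : Σ k, X k | p.1 = k} ∈ F
    · obtain ⟨k, hk⟩ := hconc
      have hrange : Set.range (Sigma.mk k) ∈ F := by
        rw [Set.range_sigmaMk]
        exact hk
      have hinj : Function.Injective (Sigma.mk k : X k → Σ k, X k) := sigma_mk_injective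
      set G : Ultrafilter (X k) := F.comap hinj hrange with hG
      obtain ⟨a, -, hGle⟩ :=
        (@isCompact_iff_ultrafilter_le_nhds _ (intervalTopology (X k)) _).1
          ((@isCompact_univ_iff _ (intervalTopology (X k))).2 (h k)) G (by simp)
      rw [le_nhds_intervalTopology_iff] at hGle
      obtain ⟨h1, h2⟩ := hGle
      refine ⟨⟨k, a⟩, Set.mem_univ _, le_nhds_intervalTopology_iff.2 ⟨?_, ?_⟩⟩
      · rintro ⟨j, b⟩ hab
        by_cases hjk : j = k
        · subst hjk
          rw [Sigma.mk_le_mk_iff] at hab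
          have := h1 b hab
          simp only [hG, Ultrafilter.mem_coe, Ultrafilter.mem_comap] at this
          refine Filter.mem_of_superset this ?_
          rintro p ⟨x, hx, rfl⟩ hle
          simp only [Set.mem_Iic, Set.mem_Ici, Sigma.mk_le_mk_iff] at hle; exact hx hle
        · -- (Iic ⟨j,b⟩)ᶜ ⊇ component k
          refine Filter.mem_of_superset hk ?_
          rintro ⟨i, c⟩ (rfl : i = k) hle
          exact hjk (hcomp hle).symm
      · rintro ⟨j, b⟩ hab
        by_cases hjk : j = k
        · subst hjk
          rw [Sigma.mk_le_mk_iff] at hab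
          have := h2 b hab
          simp only [hG, Ultrafilter.mem_coe, Ultrafilter.mem_comap] at this
          refine Filter.mem_of_superset this ?_
          rintro p ⟨x, hx, rfl⟩ hle
          simp only [Set.mem_Iic, Set.mem_Ici, Sigma.mk_le_mk_iff] at hle; exact hx hle
        · refine Filter.mem_of_superset hk ?_
          rintro ⟨i, c⟩ (rfl : i = k) hle
          exact hjk (hcomp hle)
    · -- no component in F: F converges to any point; Σ is nonempty since F exists
      push_neg at hconc
      have hco : ∀ k, {p : Σ k, X k | p.1 ≠ k} ∈ F := by
        intro k
        have := (Ultrafilter.compl_mem_iff_notMem (s := {p : Σ k, X k | p.1 = k})).2 (hconc k)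
        convert this using 1
        rfl
      obtain ⟨⟨k, a⟩⟩ : Nonempty (Σ k, X k) := Filter.nonempty_of_neBot F
      refine ⟨⟨k, a⟩, Set.mem_univ _, le_nhds_intervalTopology_iff.2 ⟨?_, ?_⟩⟩
      · rintro ⟨j, b⟩ _
        refine Filter.mem_of_superset (hco j) ?_
        rintro ⟨i, c⟩ hij hle
        exact hij (hcomp hle)
      · rintro ⟨j, b⟩ _
        refine Filter.mem_of_superset (hco j) ?_
        rintro ⟨i, c⟩ hij hle
        exact hij (hcomp hle).symm
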